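/- Fix a > 0. As η → ∞, the projected flux matrices converge to the equilibrium splitting: A·P(η)⁻¹·diag(1,0)·P(η) → [[0,1],[0,1/a]] and A·P(η)⁻¹·diag(0,1)·P(η) → [[0,0],[1,−1/a]]. -/

import Mathlib

noncomputable def Mmat (a η : ℝ) : Matrix (Fin 2) (Fin 2) ℝ :=
  !![-η * a, 1 + η; 1, 0]

noncomputable def lamP (a η : ℝ) : ℝ :=
  (-(a * η) + Real.sqrt (a ^ 2 * η ^ 2 + 4 * (η + 1))) / 2

noncomputable def lamM (a η : ℝ) : ℝ :=
  (-(a * η) - Real.sqrt (a ^ 2 * η ^ 2 + 4 * (η + 1))) / 2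

noncomputable def Lp (a η : ℝ) : Fin 2 → ℝ :=
  (Real.sqrt ((1 + η) ^ 2 + lamP a η ^ 2))⁻¹ • ![lamP a η, 1 + η]

noncomputable def Lm (a η : ℝ) : Fin 2 → ℝ :=
  (Real.sqrt ((1 + η) ^ 2 + lamM a η ^ 2))⁻¹ • ![lamM a η, 1 + η]

noncomputable def eucNorm (v : Fin 2 → ℝ) : ℝ :=
  Real.sqrt (v 0 ^ 2 + v 1 ^ 2)

noncomputable def Pmat (a η : ℝ) : Matrix (Fin 2) (Fin 2) ℝ :=
  Matrix.of ![Lp a η, Lm a η]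

def Amat : Matrix (Fin 2) (Fin 2) ℝ := !![0, 1; 1, 0]

noncomputable def tq (a η : ℝ) : ℝ := Real.sqrt (a ^ 2 * η ^ 2 + 4 * (η + 1))

set_option maxHeartbeats 2000000 in
lemma key (a η : ℝ) (ha : 0 < a) (hη : 0 ≤ η) :
    Amat * (Pmat a η)⁻¹ * !![(1:ℝ), 0; 0, 0] * Pmat a η =
      !![1 / tq a η, (a * η + tq a η) / (2 * tq a η);
         (tq a η - a * η) / (2 * tq a η), (1 + η) / tq a η] ∧
    Amat * (Pmat a η)⁻¹ * !![(0:ℝ), 0; 0, 1] * Pmat a η =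
      !![-(1 / tq a η), (tq a η - a * η) / (2 * tq a η);
         (a * η + tq a η) / (2 * tq a η), -((1 + η) / tq a η)] := by
  set t := tq a η with htdef
  set lp := lamP a η with hlpdef
  set lm := lamM a η with hlmdef
  set np := Real.sqrt ((1 + η) ^ 2 + lp ^ 2) with hnpdef
  set nm := Real.sqrt ((1 + η) ^ 2 + lm ^ 2) with hnmdef
  have harg : (0:ℝ) ≤ a ^ 2 * η ^ 2 + 4 * (η + 1) := by positivity
  have ht2 : t ^ 2 = a ^ 2 * η ^ 2 + 4 * (η + 1) := Real.sq_sqrt harg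
  have ht : 0 < t := by
    rw [htdef, tq]; apply Real.sqrt_pos.2; nlinarith
  have hη1 : (0:ℝ) < 1 + η := by linarith
  have hnp : 0 < np := by rw [hnpdef]; apply Real.sqrt_pos.2; nlinarith
  have hnm : 0 < nm := by rw [hnmdef]; apply Real.sqrt_pos.2; nlinarith
  have hlp : lp = (t - a * η) / 2 := by rw [hlpdef, lamP, htdef, tq]; ring
  have hlm : lm = -(a * η + t) / 2 := by rw [hlmdef, lamM, htdef, tq]; ring
  have hdiff : lp - lm = t := by rw [hlp, hlm]; ring
  have hprod : lp * lm = -(η + 1) := by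
    rw [hlp, hlm]; nlinarith [ht2]
  clear_value t lp lm np nm
  have hP : Pmat a η = !![lp / np, (1 + η) / np; lm / nm, (1 + η) / nm] := by
    ext i j
    fin_cases i <;> fin_cases j <;>
      simp [Pmat, Lp, Lm, ← hlpdef, ← hlmdef, ← hnpdef, ← hnmdef] <;> ring
  set Q : Matrix (Fin 2) (Fin 2) ℝ :=
    !![np / t, -(nm / t); -(lm * np / ((1 + η) * t)), lp * nm / ((1 + η) * t)] with hQdef
  have hPQ : Pmat a η * Q = 1 := by
    rw [hP, hQdef]
    ext i j
    fin_cases i <;> fin_cases j <;>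
      simp [Matrix.mul_apply, Fin.sum_univ_two, Matrix.one_apply] <;>
      field_simp <;>
      first
      | ring1
      | linear_combination (np*(1+η)*t) * hdiff
      | linear_combination (nm*(1+η)*t) * hdiff
      | linear_combination (-(np*t)) * hprod
      | linear_combination (nm*t) * hprod
      | linear_combination (2*np*t) * hlp
      | linear_combination (2*(1+η)*t*nm) * hlp
      | linear_combination (-2*(1+η)*t*np) * hlm
      | linear_combination (-2*t*nm) * hlm
      | linear_combination hdiff
  have hinv : (Pmat a η)⁻¹ = Q := Matrix.inv_eq_right_inv hPQ
  rw [hinv, hP, hQdef]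
  constructor <;>
  · simp only [Amat, Matrix.mul_fin_two]
    ext i j
    fin_cases i <;> fin_cases j <;>
      simp only [Matrix.cons_val', Matrix.cons_val_zero, Matrix.cons_val_one,
        Matrix.head_cons, Matrix.head_fin_const, Matrix.empty_val',
        Matrix.cons_val_fin_one, Matrix.of_apply, Fin.zero_eta, Fin.mk_one] <;>
      field_simp <;>
      first
      | ring1
      | linear_combination (np*(1+η)*t) * hdiff
      | linear_combination (nm*(1+η)*t) * hdiff
      | linear_combination (-(np*t)) * hprod
      | linear_combination (nm*t) * hprod
      | linear_combination (2*np*t) * hlp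
      | linear_combination (2*(1+η)*t*nm) * hlp
      | linear_combination (-2*(1+η)*t*np) * hlm
      | linear_combination (-2*t*nm) * hlm
      | linear_combination (-(nm*np)) * hprod
      | linear_combination (-2*nm*np) * hlm
      | linear_combination (2*nm*np*(1+η)) * hlp
      | linear_combination (np*nm) * hprod
      | linear_combination (2*np*nm) * hlp
      | linear_combination (-2*np*nm*(1+η)) * hlm

lemma tend_eta_div (a : ℝ) (ha : 0 < a) :
    Filter.Tendsto (fun η => η / tq a η) Filter.atTop (nhds a⁻¹) := by
  have h4 : Filter.Tendsto (fun η : ℝ => 4 / η + 4 / η ^ 2) Filter.atTop (nhds 0) := by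
    have h1 : Filter.Tendsto (fun η : ℝ => 4 / η) Filter.atTop (nhds 0) :=
      tendsto_const_nhds.div_atTop Filter.tendsto_id
    have h2 : Filter.Tendsto (fun η : ℝ => 4 / η ^ 2) Filter.atTop (nhds 0) := by
      have := h1.mul tendsto_inv_atTop_zero
      simp only [mul_zero] at this
      exact this.congr fun η => by ring
    simpa using h1.add h2
  have h1 : Filter.Tendsto (fun η : ℝ => a ^ 2 + (4 / η + 4 / η ^ 2))
      Filter.atTop (nhds (a ^ 2)) := by
    simpa using (tendsto_const_nhds (x := a ^ 2) (f := Filter.atTop)).add h4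
  have hs : Filter.Tendsto (fun η : ℝ => Real.sqrt (a ^ 2 + (4 / η + 4 / η ^ 2)))
      Filter.atTop (nhds a) := by
    have := (Real.continuous_sqrt.tendsto (a ^ 2)).comp h1
    simpa [Real.sqrt_sq ha.le, Function.comp_def] using this
  have h2 : Filter.Tendsto (fun η : ℝ => (Real.sqrt (a ^ 2 + (4 / η + 4 / η ^ 2)))⁻¹)
      Filter.atTop (nhds a⁻¹) := hs.inv₀ (ne_of_gt ha)
  refine h2.congr' ?_
  filter_upwards [Filter.eventually_gt_atTop (0:ℝ)] with η hη
  have hteq : tq a η = η * Real.sqrt (a ^ 2 + (4 / η + 4 / η ^ 2)) := by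
    rw [tq, show a ^ 2 * η ^ 2 + 4 * (η + 1) = η ^ 2 * (a ^ 2 + (4 / η + 4 / η ^ 2)) by
      field_simp]
    rw [Real.sqrt_mul (by positivity), Real.sqrt_sq hη.le]
  rw [hteq, ← div_div, div_self hη.ne', one_div]

lemma tend_inv_t (a : ℝ) (ha : 0 < a) :
    Filter.Tendsto (fun η => (tq a η)⁻¹) Filter.atTop (nhds 0) := by
  have hmono : Filter.Tendsto (fun η : ℝ => tq a η) Filter.atTop Filter.atTop := by
    apply Filter.tendsto_atTop_mono' _ _ (Filter.Tendsto.const_mul_atTop ha Filter.tendsto_id)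
    filter_upwards [Filter.eventually_ge_atTop (0:ℝ)] with η hη
    have h1 : a * η = Real.sqrt ((a * η) ^ 2) := (Real.sqrt_sq (by positivity)).symm
    simp only [id_eq]
    rw [h1, tq]
    apply Real.sqrt_le_sqrt
    nlinarith
  exact hmono.inv_tendsto_atTop

lemma tq_pos (a : ℝ) : ∀ᶠ η : ℝ in Filter.atTop, 0 < tq a η := by
  filter_upwards [Filter.eventually_ge_atTop (0:ℝ)] with η hη
  rw [tq]
  apply Real.sqrt_pos.2
  nlinarith

theorem stmt12 (a : ℝ) (ha : 0 < a) :
    Filter.Tendsto (fun η => Amat * (Pmat a η)⁻¹ * !![(1:ℝ), 0; 0, 0] * Pmat a η)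
      Filter.atTop (nhds !![(0:ℝ), 1; 0, 1 / a]) ∧
    Filter.Tendsto (fun η => Amat * (Pmat a η)⁻¹ * !![(0:ℝ), 0; 0, 1] * Pmat a η)
      Filter.atTop (nhds !![(0:ℝ), 0; 1, -1 / a]) := by
  have hd := tend_eta_div a ha
  have hi := tend_inv_t a ha
  have htp := tq_pos a
  -- entrywise limits
  have e0 : Filter.Tendsto (fun η => 1 / tq a η) Filter.atTop (nhds 0) := by
    simpa [one_div] using hi
  have ep : Filter.Tendsto (fun η => (a * η + tq a η) / (2 * tq a η))
      Filter.atTop (nhds 1) := by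
    have h := (hd.const_mul (a / 2)).add_const (1 / 2)
    rw [show a / 2 * a⁻¹ + 1 / 2 = 1 by field_simp; ring] at h
    refine h.congr' ?_
    filter_upwards [htp] with η h0
    field_simp <;> ring1
  have em : Filter.Tendsto (fun η => (tq a η - a * η) / (2 * tq a η))
      Filter.atTop (nhds 0) := by
    have h := (tendsto_const_nhds (x := (1:ℝ)/2) (f := Filter.atTop)).sub
      (hd.const_mul (a / 2))
    rw [show 1 / 2 - a / 2 * a⁻¹ = 0 by field_simp; norm_num] at h
    refine h.congr' ?_
    filter_upwards [htp] with η h0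
    field_simp <;> ring1
  have e1 : Filter.Tendsto (fun η => (1 + η) / tq a η) Filter.atTop (nhds (1 / a)) := by
    have h := hi.add hd
    rw [show (0:ℝ) + a⁻¹ = 1 / a by rw [zero_add, one_div]] at h
    exact h.congr fun η => by rw [add_div, one_div, div_eq_mul_inv]
  constructor
  · have heq : (fun η => Amat * (Pmat a η)⁻¹ * !![(1:ℝ), 0; 0, 0] * Pmat a η)
        =ᶠ[Filter.atTop] fun η => !![1 / tq a η, (a * η + tq a η) / (2 * tq a η);
          (tq a η - a * η) / (2 * tq a η), (1 + η) / tq a η] := by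
      filter_upwards [Filter.eventually_ge_atTop (0:ℝ)] with η hη
      exact (key a η ha hη).1
    rw [Filter.tendsto_congr' heq]
    apply tendsto_pi_nhds.2
    intro i
    rw [tendsto_pi_nhds]
    intro j
    fin_cases i <;> fin_cases j <;> simp only [Matrix.cons_val', Matrix.cons_val_zero,
      Matrix.cons_val_one, Matrix.head_cons, Matrix.head_fin_const, Matrix.empty_val',
      Matrix.cons_val_fin_one, Matrix.of_apply, Fin.zero_eta, Fin.mk_one]
    · exact e0
    · exact ep
    · exact em
    · exact e1
  · have heq : (fun η => Amat * (Pmat a η)⁻¹ * !![(0:ℝ), 0; 0, 1] * Pmat a η)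
        =ᶠ[Filter.atTop] fun η => !![-(1 / tq a η), (tq a η - a * η) / (2 * tq a η);
          (a * η + tq a η) / (2 * tq a η), -((1 + η) / tq a η)] := by
      filter_upwards [Filter.eventually_ge_atTop (0:ℝ)] with η hη
      exact (key a η ha hη).2
    rw [Filter.tendsto_congr' heq]
    apply tendsto_pi_nhds.2
    intro i
    rw [tendsto_pi_nhds]
    intro j
    fin_cases i <;> fin_cases j <;> simp only [Matrix.cons_val', Matrix.cons_val_zero,
      Matrix.cons_val_one, Matrix.head_cons, Matrix.head_fin_const, Matrix.empty_val',
      Matrix.cons_val_fin_one, Matrix.of_apply, Fin.zero_eta, Fin.mk_one]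
    · simpa using e0.neg
    · exact em
    · exact ep
    · simpa [neg_div] using e1.neg
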